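/- A subspace Y of a quasi-Polish space X is quasi-Polish (in the subspace topology) if and only if Y is a Π⁰₂ subset of X. -/

import Mathlib

open TopologicalSpace Set Topology

/-- A Π⁰₂ set: a countable intersection of sets of the form (complement of open) ∪ open. -/
def IsPi02 {X : Type*} [TopologicalSpace X] (s : Set X) : Prop :=
  ∃ U V : ℕ → Set X, (∀ n, IsOpen (U n)) ∧ (∀ n, IsOpen (V n)) ∧
    s = ⋂ n, ((U n)ᶜ ∪ V n)

/-- A quasi-Polish space: homeomorphic to a Π⁰₂ subspace of 𝕊^ℕ,
where 𝕊 is the Sierpiński space (`Prop` with its topology in Mathlib). -/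
def QuasiPolish (X : Type*) [TopologicalSpace X] : Prop :=
  ∃ s : Set (ℕ → Prop), IsPi02 s ∧ Nonempty (X ≃ₜ s)

lemma isPi02_inter {X : Type*} [TopologicalSpace X] {s t : Set X}
    (hs : IsPi02 s) (ht : IsPi02 t) : IsPi02 (s ∩ t) := by
  obtain ⟨U, V, hU, hV, rfl⟩ := hs
  obtain ⟨U', V', hU', hV', rfl⟩ := ht
  refine ⟨fun n => if n % 2 = 0 then U (n / 2) else U' (n / 2),
         fun n => if n % 2 = 0 then V (n / 2) else V' (n / 2),
         fun n => by dsimp only; split <;> [exact hU _; exact hU' _],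
         fun n => by dsimp only; split <;> [exact hV _; exact hV' _], ?_⟩
  ext x
  simp only [mem_inter_iff, mem_iInter, mem_union, mem_compl_iff]
  constructor
  · rintro ⟨h1, h2⟩ n
    rcases Nat.even_or_odd n with he | ho
    · have hm : n % 2 = 0 := Nat.even_iff.mp he
      simp only [hm, if_pos rfl]; exact h1 _
    · have hm : n % 2 = 1 := Nat.odd_iff.mp ho
      simp only [hm]; norm_num; exact h2 _
  · intro h
    refine ⟨fun n => ?_, fun n => ?_⟩
    · have := h (2 * n)
      simpa [Nat.mul_mod_right, Nat.mul_div_cancel_left] using this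
    · have := h (2 * n + 1)
      have hm : (2 * n + 1) % 2 = 1 := by omega
      have hd : (2 * n + 1) / 2 = n := by omega
      simpa [hm, hd] using this

lemma isPi02_preimage {X Z : Type*} [TopologicalSpace X] [TopologicalSpace Z] {f : X → Z}
    (hf : Continuous f) {t : Set Z} (ht : IsPi02 t) : IsPi02 (f ⁻¹' t) := by
  obtain ⟨U, V, hU, hV, rfl⟩ := ht
  exact ⟨fun n => f ⁻¹' U n, fun n => f ⁻¹' V n, fun n => (hU n).preimage hf,
    fun n => (hV n).preimage hf, by
      simp only [preimage_iInter, preimage_union, preimage_compl]⟩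

lemma isPi02_le_maps {X : Type*} [TopologicalSpace X] {f g : X → ℕ → Prop}
    (hf : Continuous f) (hg : Continuous g) : IsPi02 {x | ∀ n, f x n → g x n} := by
  refine ⟨fun n => {x | f x n}, fun n => {x | g x n},
    fun n => continuous_Prop.mp ((continuous_apply n).comp hf),
    fun n => continuous_Prop.mp ((continuous_apply n).comp hg), ?_⟩
  ext x
  simp only [mem_setOf_eq, mem_iInter, mem_union, mem_compl_iff]
  exact forall_congr' fun n => by tauto

lemma isPi02_eq_maps {X : Type*} [TopologicalSpace X] {f g : X → ℕ → Prop}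
    (hf : Continuous f) (hg : Continuous g) : IsPi02 {x | f x = g x} := by
  have heq : {x | f x = g x} = {x | ∀ n, f x n → g x n} ∩ {x | ∀ n, g x n → f x n} := by
    ext x
    simp only [mem_setOf_eq, mem_inter_iff]
    constructor
    · intro h; rw [h]; exact ⟨fun _ h => h, fun _ h => h⟩
    · rintro ⟨h1, h2⟩; funext n; exact propext ⟨h1 n, h2 n⟩
  rw [heq]
  exact isPi02_inter (isPi02_le_maps hf hg) (isPi02_le_maps hg hf)

/-- Every continuous map from a subspace into the Sierpiński product extends continuously. -/
lemma exists_continuous_extension {X : Type*} [TopologicalSpace X] {Y : Set X}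
    (f : Y → ℕ → Prop) (hf : Continuous f) :
    ∃ F : X → ℕ → Prop, Continuous F ∧ ∀ y : Y, F y = f y := by
  have h : ∀ n, ∃ S : Set X, IsOpen S ∧ Subtype.val ⁻¹' S = {y : Y | f y n} := by
    intro n
    have hop : IsOpen {y : Y | f y n} := continuous_Prop.mp ((continuous_apply n).comp hf)
    rwa [isOpen_induced_iff] at hop
  choose S hSopen hSeq using h
  refine ⟨fun x n => x ∈ S n, ?_, ?_⟩
  · exact continuous_pi fun n => continuous_Prop.mpr (hSopen n)
  · intro y
    funext n
    have : (y : X) ∈ S n ↔ f y n := by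
      constructor
      · intro hy
        have : y ∈ Subtype.val ⁻¹' S n := hy
        rw [hSeq n] at this; exact this
      · intro hy
        have : y ∈ ({y : Y | f y n} : Set Y) := hy
        rw [← hSeq n] at this; exact this
    exact propext this

theorem quasiPolish_subspace_iff_isPi02 {X : Type*} [TopologicalSpace X]
    (hX : QuasiPolish X) (Y : Set X) : QuasiPolish Y ↔ IsPi02 Y := by
  obtain ⟨s, hs, ⟨h⟩⟩ := hX
  set j : X → ℕ → Prop := fun x => (h x : ℕ → Prop) with hj
  have hjcont : Continuous j := continuous_subtype_val.comp h.continuous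
  have hjinj : Function.Injective j := Subtype.val_injective.comp h.injective
  have hjind : IsInducing j := IsInducing.subtypeVal.comp h.isInducing
  have hjrange : range j = s := by
    ext p
    constructor
    · rintro ⟨x, rfl⟩; exact (h x).2
    · intro hp
      exact ⟨h.symm ⟨p, hp⟩, by simp [hj]⟩
  constructor
  · -- hard direction: quasi-Polish subspace is Π⁰₂
    rintro ⟨t, ht, ⟨e⟩⟩
    -- extend (inclusion of Y into 𝕊^ℕ via e) to F : X → 𝕊^ℕ
    obtain ⟨F, hFcont, hF⟩ := exists_continuous_extension (fun y => (e y : ℕ → Prop))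
      (continuous_subtype_val.comp e.continuous)
    -- extend (j ∘ e.symm : t → 𝕊^ℕ) to G : 𝕊^ℕ → 𝕊^ℕ
    obtain ⟨G, hGcont, hG⟩ := exists_continuous_extension (fun p : t => j (e.symm p))
      (hjcont.comp (continuous_subtype_val.comp e.symm.continuous))
    have key : Y = F ⁻¹' t ∩ {x | G (F x) = j x} := by
      ext x
      simp only [mem_inter_iff, mem_preimage, mem_setOf_eq]
      constructor
      · intro hx
        have hFx : F x = (e ⟨x, hx⟩ : ℕ → Prop) := hF ⟨x, hx⟩
        have hmem : F x ∈ t := by rw [hFx]; exact (e ⟨x, hx⟩).2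
        refine ⟨hmem, ?_⟩
        have : (⟨F x, hmem⟩ : t) = e ⟨x, hx⟩ := Subtype.ext hFx
        rw [show G (F x) = j (e.symm ⟨F x, hmem⟩) from hG ⟨F x, hmem⟩, this,
          e.symm_apply_apply]
      · rintro ⟨h1, h2⟩
        have : G (F x) = j ((e.symm ⟨F x, h1⟩ : Y) : X) := hG ⟨F x, h1⟩
        rw [this] at h2
        have hx : ((e.symm ⟨F x, h1⟩ : Y) : X) = x := hjinj h2
        rw [← hx]; exact (e.symm ⟨F x, h1⟩).2
    rw [key]
    exact isPi02_inter (isPi02_preimage hFcont ht)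
      (isPi02_eq_maps (hGcont.comp hFcont) hjcont)
  · -- easy direction: Π⁰₂ subset is quasi-Polish
    intro hY
    obtain ⟨U, V, hU, hV, hYeq⟩ := hY
    -- opens of X come from 𝕊^ℕ via the inducing map j
    have hU' : ∀ n, ∃ U' : Set (ℕ → Prop), IsOpen U' ∧ j ⁻¹' U' = U n := fun n =>
      hjind.isOpen_iff.mp (hU n)
    have hV' : ∀ n, ∃ V' : Set (ℕ → Prop), IsOpen V' ∧ j ⁻¹' V' = V n := fun n =>
      hjind.isOpen_iff.mp (hV n)
    choose U' hU'open hU'eq using hU'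
    choose V' hV'open hV'eq using hV'
    set B : Set (ℕ → Prop) := ⋂ n, ((U' n)ᶜ ∪ V' n) with hB
    have hYpre : Y = j ⁻¹' B := by
      rw [hYeq, hB, preimage_iInter]
      refine iInter_congr fun n => ?_
      rw [preimage_union, preimage_compl, hU'eq, hV'eq]
    have himg : j '' Y = B ∩ s := by
      rw [hYpre, image_preimage_eq_inter_range, hjrange]
    refine ⟨j '' Y, ?_, ?_⟩
    · rw [himg]
      exact isPi02_inter ⟨U', V', hU'open, hV'open, rfl⟩ hs
    · -- Y ≃ₜ j '' Y
      have hemb : IsEmbedding (fun y : Y => j y) :=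
        (IsEmbedding.mk hjind hjinj).comp IsEmbedding.subtypeVal
      have hrange : range (fun y : Y => j y) = j '' Y := by
        rw [show (fun y : Y => j (y : X)) = j ∘ Subtype.val from rfl, range_comp,
          Subtype.range_val]
      exact ⟨(IsEmbedding.toHomeomorph hemb).trans (Homeomorph.setCongr hrange)⟩
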